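/- arXiv:2104.00666 — 4 statements merged into one kernel-verified Lean document; each statement's English description precedes it below -/
import Mathlib

section
/- Let E be an exact category, I a filtered category, F : I → E a functor with all transition maps admissible monomorphisms which is weakly co-flasque, and J ⊆ I a directed subcategory. Then the restriction F|_J is weakly co-flasque as a functor J → E. -/
open CategoryTheory Limits

universe v u

/-- A Quillen exact structure on an additive category: a class of kernel-cokernel pairs
("short exact sequences") satisfying (a selection of) Quillen's axioms. -/
structure ExactStr (C : Type u) [Category.{v} C] [Preadditive C] where
  ses : ∀ ⦃X Y Z : C⦄, (X ⟶ Y) → (Y ⟶ Z) → Prop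
  comp_zero : ∀ ⦃X Y Z : C⦄ ⦃f : X ⟶ Y⦄ ⦃g : Y ⟶ Z⦄, ses f g → f ≫ g = 0
  isKernel : ∀ ⦃X Y Z : C⦄ ⦃f : X ⟶ Y⦄ ⦃g : Y ⟶ Z⦄ (h : ses f g),
    Nonempty (IsLimit (KernelFork.ofι f (comp_zero h)))
  isCokernel : ∀ ⦃X Y Z : C⦄ ⦃f : X ⟶ Y⦄ ⦃g : Y ⟶ Z⦄ (h : ses f g),
    Nonempty (IsColimit (CokernelCofork.ofπ g (comp_zero h)))
  admMono_comp : ∀ ⦃X Y Z : C⦄ ⦃f : X ⟶ Y⦄ ⦃g : Y ⟶ Z⦄,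
    (∃ (W : C) (p : Y ⟶ W), ses f p) → (∃ (W : C) (p : Z ⟶ W), ses g p) →
    ∃ (W : C) (p : Z ⟶ W), ses (f ≫ g) p
  admEpi_comp : ∀ ⦃X Y Z : C⦄ ⦃f : X ⟶ Y⦄ ⦃g : Y ⟶ Z⦄,
    (∃ (W : C) (i : W ⟶ X), ses i f) → (∃ (W : C) (i : W ⟶ Y), ses i g) →
    ∃ (W : C) (i : W ⟶ X), ses i (f ≫ g)
  pushout_admMono : ∀ ⦃X Y X' Y' : C⦄ ⦃f : X ⟶ Y⦄ ⦃u : X ⟶ X'⦄ ⦃f' : X' ⟶ Y'⦄ ⦃u' : Y ⟶ Y'⦄,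
    IsPushout u f f' u' → (∃ (W : C) (p : Y ⟶ W), ses f p) →
    ∃ (W : C) (p : Y' ⟶ W), ses f' p
  pullback_admEpi : ∀ ⦃X Y X' Y' : C⦄ ⦃g : Y ⟶ X⦄ ⦃u : X' ⟶ X⦄ ⦃g' : Y' ⟶ X'⦄ ⦃u' : Y' ⟶ Y⦄,
    IsPullback u' g' g u → (∃ (W : C) (i : W ⟶ Y), ses i g) →
    ∃ (W : C) (i : W ⟶ Y'), ses i g'

namespace ExactStr

variable {C : Type u} [Category.{v} C] [Preadditive C] (E : ExactStr C)

/-- Admissible monomorphisms. -/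
def AdmMono {X Y : C} (f : X ⟶ Y) : Prop := ∃ (W : C) (p : Y ⟶ W), E.ses f p

/-- Admissible epimorphisms. -/
def AdmEpi {Y Z : C} (g : Y ⟶ Z) : Prop := ∃ (W : C) (i : W ⟶ Y), E.ses i g

/-- Weak idempotent completeness: every split monomorphism is admissible. -/
def WIC : Prop :=
  ∀ ⦃X Y : C⦄ (f : X ⟶ Y) (r : Y ⟶ X), f ≫ r = 𝟙 X → E.AdmMono f

/-- A (ℤ-indexed, homologically graded) chain complex is acyclic for the exact structure `E`
if each differential factors as an admissible epi onto `Z (n-1)` followed by an admissible mono,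
with the resulting sequences `0 → Z n → Xₙ → Z (n-1) → 0` short exact. -/
def Acyclic (X : ChainComplex C ℤ) : Prop :=
  ∃ (Z : ℤ → C) (i : ∀ n, Z n ⟶ X.X n) (p : ∀ n, X.X n ⟶ Z (n - 1)),
    (∀ n, X.d n (n - 1) = p n ≫ i (n - 1)) ∧ (∀ n, E.ses (i n) (p n))

/-- Quasi-isomorphisms of complexes in an exact category: chain maps whose
mapping cone is acyclic. -/
def QIso [HasBinaryBiproducts C] {X Y : ChainComplex C ℤ} (f : X ⟶ Y) : Prop :=
  haveI : HomologicalComplex.HasHomotopyCofiber f := ⟨fun _ _ _ => inferInstance⟩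
  E.Acyclic (HomologicalComplex.homotopyCofiber f)

end ExactStr

/-- A subset of a preorder is directed. -/
def DirectedSubset {I : Type v} [Preorder I] (J : Set I) : Prop :=
  ∀ a ∈ J, ∀ b ∈ J, ∃ c ∈ J, a ≤ c ∧ b ≤ c

/-- A direct system `F : I ⥤ E` over a directed preorder is weakly co-flasque if all its
transition maps are admissible monomorphisms and, for every directed subset `J ⊆ I`, the
canonical map `colim_J F|_J → colim_I F` is an admissible monomorphism. -/
def WeaklyCoFlasque {C : Type u} [Category.{v} C] [Preadditive C]
    [HasColimitsOfSize.{v, v} C] {I : Type v} [Preorder I]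
    (E : ExactStr C) (F : I ⥤ C) : Prop :=
  (∀ (i j : I) (h : i ≤ j), E.AdmMono (F.map (homOfLE h))) ∧
  ∀ (J : Set I), DirectedSubset J →
    E.AdmMono (colimit.pre F (Subtype.mono_coe (· ∈ J)).functor)

section Auxiliary

variable {C : Type u} [Category.{v} C] [Preadditive C]

/-- Hom-sets in a preorder category are subsingletons. -/
instance preorderHomSubsingleton {α : Type*} [Preorder α] (a b : α) :
    Subsingleton (a ⟶ b) :=
  ⟨fun f g => by rcases f with ⟨⟨_⟩⟩; rcases g with ⟨⟨_⟩⟩; rfl⟩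

/-- Isomorphisms are admissible monomorphisms (using weak idempotent completeness). -/
lemma ExactStr.admMono_of_isIso (E : ExactStr C) (hwic : E.WIC) {X Y : C}
    (e : X ⟶ Y) [IsIso e] : E.AdmMono e :=
  hwic e (inv e) (by simp)

/-- The "obscure axiom": in a weakly idempotent complete exact category, if `f ≫ g` is an
admissible monomorphism then so is `f`. -/
lemma ExactStr.obscure [HasBinaryBiproducts C] (E : ExactStr C) (hwic : E.WIC)
    {X Y Z : C} (f : X ⟶ Y) (g : Y ⟶ Z) (h : E.AdmMono (f ≫ g)) : E.AdmMono f := by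
  -- Step 1: `biprod.lift f (f ≫ g)` is an admissible mono.
  have hs : E.AdmMono (biprod.lift f (𝟙 X) : X ⟶ Y ⊞ X) := hwic _ biprod.snd (by simp)
  have hposq : (biprod.inr : X ⟶ Y ⊞ X) ≫ biprod.map (𝟙 Y) (f ≫ g)
      = (f ≫ g) ≫ (biprod.inr : Z ⟶ Y ⊞ Z) := by simp
  have hpo : IsPushout (biprod.inr : X ⟶ Y ⊞ X) (f ≫ g)
      (biprod.map (𝟙 Y) (f ≫ g)) (biprod.inr : Z ⟶ Y ⊞ Z) := by
    refine IsPushout.of_isColimit (PushoutCocone.IsColimit.mk hposq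
      (fun s => biprod.desc (biprod.inl ≫ s.inl) s.inr) (fun s => ?_) (fun s => ?_)
      (fun s m h1 h2 => ?_))
    · apply biprod.hom_ext'
      · simp
      · simp only [biprod.inr_map_assoc, Category.assoc, biprod.inr_desc]
        rw [← Category.assoc]
        exact s.condition.symm
    · simp
    · apply biprod.hom_ext'
      · have h3 := congrArg (fun t => biprod.inl ≫ t) h1
        simpa using h3
      · simpa using h2
  have ht := E.pushout_admMono hpo h
  have hA : E.AdmMono (biprod.lift f (f ≫ g)) := by
    have hcomp := E.admMono_comp hs ht
    have heq : biprod.lift f (𝟙 X) ≫ biprod.map (𝟙 Y) (f ≫ g) = biprod.lift f (f ≫ g) := by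
      apply biprod.hom_ext <;> simp
    rwa [heq] at hcomp
  -- Step 2: conjugating by an automorphism, `biprod.lift f 0` is an admissible mono.
  have hBB' : (biprod.lift biprod.fst (biprod.snd - biprod.fst ≫ g) : Y ⊞ Z ⟶ Y ⊞ Z)
      ≫ biprod.lift biprod.fst (biprod.snd + biprod.fst ≫ g) = 𝟙 (Y ⊞ Z) := by
    apply biprod.hom_ext <;> simp [Preadditive.sub_comp, Preadditive.add_comp,
      Preadditive.comp_sub, Preadditive.comp_add]
  have hm : E.AdmMono (biprod.lift f (0 : X ⟶ Z)) := by
    have hstep := E.admMono_comp hA (hwic _ _ hBB')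
    have heq : biprod.lift f (f ≫ g)
        ≫ biprod.lift biprod.fst (biprod.snd - biprod.fst ≫ g) = biprod.lift f 0 := by
      apply biprod.hom_ext <;> simp
    rwa [heq] at hstep
  -- Step 3: build the admissible epi `π : Y ⟶ V` with kernel `f`.
  obtain ⟨W, p, hp⟩ := hm
  have hmp : biprod.lift f (0 : X ⟶ Z) ≫ p = 0 := E.comp_zero hp
  obtain ⟨hker⟩ := E.isKernel hp
  obtain ⟨hcoker⟩ := E.isCokernel hp
  have hpepi : Epi p := epi_of_isColimit_cofork hcoker
  obtain ⟨w0, hw0⟩ := CokernelCofork.IsColimit.desc' hcoker biprod.snd (by simp)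
  let w : W ⟶ Z := w0
  have hw : p ≫ w = biprod.snd := hw0
  have hw_assoc : ∀ {T : C} (t : Z ⟶ T), p ≫ w ≫ t = biprod.snd ≫ t := fun t => by
    rw [← Category.assoc, hw]
  have hqw : (biprod.inr ≫ p) ≫ w = 𝟙 Z := by rw [Category.assoc, hw]; simp
  have hq : E.AdmMono (biprod.inr ≫ p : Z ⟶ W) := hwic _ w hqw
  obtain ⟨V, c, hc⟩ := hq
  have hqc : (biprod.inr ≫ p) ≫ c = 0 := E.comp_zero hc
  obtain ⟨hkerc⟩ := E.isKernel hc
  obtain ⟨hcokerc⟩ := E.isCokernel hc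
  have hcepi : Epi c := epi_of_isColimit_cofork hcokerc
  obtain ⟨u0, hu0⟩ := CokernelCofork.IsColimit.desc' hcokerc
    (𝟙 W - w ≫ (biprod.inr ≫ p))
    (by rw [Preadditive.comp_sub, Category.comp_id, ← Category.assoc, hqw,
      Category.id_comp, sub_self])
  let u : V ⟶ W := u0
  have hu : c ≫ u = 𝟙 W - w ≫ (biprod.inr ≫ p) := hu0
  have huc : u ≫ c = 𝟙 V := by
    rw [← cancel_epi c, ← Category.assoc, hu, Preadditive.sub_comp, Category.id_comp,
      Category.assoc, hqc, Limits.comp_zero, sub_zero, Category.comp_id]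
  have huw : u ≫ w = 0 := by
    rw [← cancel_epi c, ← Category.assoc, hu, Preadditive.sub_comp, Category.id_comp,
      Category.assoc, hqw, Category.comp_id, sub_self, Limits.comp_zero]
  have hinlpw : biprod.inl ≫ p ≫ w = (0 : Y ⟶ Z) := by rw [hw]; simp
  have hsq : biprod.inl ≫ p = (biprod.inl ≫ p ≫ c) ≫ u := by
    simp only [Category.assoc]
    rw [hu, Preadditive.comp_sub, Preadditive.comp_sub, Category.comp_id]
    rw [hw_assoc]
    simp
  have hPB : IsPullback (biprod.inl : Y ⟶ Y ⊞ Z) (biprod.inl ≫ p ≫ c) p u := by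
    have hfstinl : ∀ s : PullbackCone p u, (s.fst ≫ biprod.fst) ≫ biprod.inl = s.fst := by
      intro s
      have hz : s.fst ≫ biprod.snd = 0 := by
        rw [← hw, ← Category.assoc, s.condition, Category.assoc, huw, Limits.comp_zero]
      calc (s.fst ≫ biprod.fst) ≫ biprod.inl
          = s.fst ≫ (biprod.fst ≫ biprod.inl + biprod.snd ≫ biprod.inr) := by
            rw [Preadditive.comp_add, ← Category.assoc, ← Category.assoc, hz, zero_comp,
              add_zero]
        _ = s.fst := by rw [biprod.total, Category.comp_id]
    refine IsPullback.of_isLimit (PullbackCone.IsLimit.mk hsq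
      (fun s => s.fst ≫ biprod.fst) (fun s => hfstinl s) (fun s => ?_)
      (fun s m h1 _ => ?_))
    · calc (s.fst ≫ biprod.fst) ≫ biprod.inl ≫ p ≫ c
          = ((s.fst ≫ biprod.fst) ≫ biprod.inl) ≫ p ≫ c := by simp only [Category.assoc]
        _ = s.fst ≫ p ≫ c := by rw [hfstinl s]
        _ = (s.snd ≫ u) ≫ c := by rw [← Category.assoc, s.condition]
        _ = s.snd := by rw [Category.assoc, huc, Category.comp_id]
    · have hm2 : m = (m ≫ (biprod.inl : Y ⟶ Y ⊞ Z)) ≫ biprod.fst := by simp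
      rw [hm2, h1]
  have hπadm : E.AdmEpi (biprod.inl ≫ p ≫ c) :=
    E.pullback_admEpi hPB ⟨X, biprod.lift f 0, hp⟩
  obtain ⟨K, i, hi⟩ := hπadm
  obtain ⟨hkeri⟩ := E.isKernel hi
  have hiπ : i ≫ biprod.inl ≫ p ≫ c = 0 := E.comp_zero hi
  -- Step 4: `f` is a kernel of `π`, hence isomorphic to `i`, hence admissible.
  have hfinl : f ≫ biprod.inl = biprod.lift f (0 : X ⟶ Z) := by
    apply biprod.hom_ext <;> simp
  have hfπ : f ≫ biprod.inl ≫ p ≫ c = 0 := by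
    rw [← Category.assoc, hfinl, ← Category.assoc, hmp, zero_comp]
  obtain ⟨e, he⟩ := KernelFork.IsLimit.lift' hkeri f hfπ
  have he : e ≫ i = f := he
  obtain ⟨τ0, hτ0⟩ := KernelFork.IsLimit.lift' hkerc (i ≫ biprod.inl ≫ p)
    (by simpa only [Category.assoc] using hiπ)
  let τ : K ⟶ Z := τ0
  have hτ : τ ≫ (biprod.inr ≫ p) = i ≫ biprod.inl ≫ p := hτ0
  obtain ⟨ρ, hρ⟩ := KernelFork.IsLimit.lift' hker (i ≫ biprod.inl - τ ≫ biprod.inr)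
    (by rw [Preadditive.sub_comp, Category.assoc, Category.assoc, ← hτ, sub_self])
  have hρ : ρ ≫ biprod.lift f (0 : X ⟶ Z) = i ≫ biprod.inl - τ ≫ biprod.inr := hρ
  have hρf : ρ ≫ f = i := by
    have h4 : biprod.lift f (0 : X ⟶ Z) ≫ biprod.fst = f := biprod.lift_fst _ _
    calc ρ ≫ f = ρ ≫ biprod.lift f (0 : X ⟶ Z) ≫ biprod.fst := by rw [h4]
      _ = (i ≫ biprod.inl - τ ≫ biprod.inr) ≫ biprod.fst := by
          rw [← Category.assoc, hρ]
      _ = i := by simp [Preadditive.sub_comp]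
  haveI hmonom : Mono (biprod.lift f (0 : X ⟶ Z)) := mono_of_isLimit_fork hker
  haveI hmonof : Mono f := by
    constructor
    intro T a b hab
    have : a ≫ biprod.lift f (0 : X ⟶ Z) = b ≫ biprod.lift f (0 : X ⟶ Z) := by
      apply biprod.hom_ext <;> simp [hab]
    exact (cancel_mono _).1 this
  have heρ : e ≫ ρ = 𝟙 X := by
    rw [← cancel_mono f, Category.assoc, hρf, he, Category.id_comp]
  have hadm_e : E.AdmMono e := hwic e ρ heρ
  have hfinal := E.admMono_comp hadm_e ⟨V, biprod.inl ≫ p ≫ c, hi⟩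
  rwa [he] at hfinal

end Auxiliary

/-- Let `E` be a (weakly idempotent complete) exact category, `I` a filtered
(directed) index, `F : I ⥤ E` a weakly co-flasque system with admissible-monomorphism
transition maps, and `J ⊆ I` a directed subcategory. Then the restriction `F|_J` is weakly
co-flasque. -/
theorem weaklyCoFlasque_restrict {C : Type u} [Category.{v} C] [Preadditive C]
    [HasColimitsOfSize.{v, v} C] (E : ExactStr C) (hwic : E.WIC)
    {I : Type v} [Preorder I] [IsDirected I (· ≤ ·)] [Nonempty I]
    (F : I ⥤ C) (hF : WeaklyCoFlasque E F)
    (J : Set I) (hJ : DirectedSubset J) :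
    WeaklyCoFlasque E ((Subtype.mono_coe (· ∈ J)).functor ⋙ F) := by
  haveI : HasFiniteColimits C := hasFiniteColimits_of_hasColimitsOfSize C
  haveI : HasBinaryBiproducts C := HasBinaryBiproducts.of_hasBinaryCoproducts
  constructor
  · -- transition maps of the restriction are admissible monos
    intro i j hij
    have hij' : (i : I) ≤ (j : I) := hij
    have heq : ((Subtype.mono_coe (· ∈ J)).functor ⋙ F).map (homOfLE hij)
        = F.map (homOfLE hij') := by
      rw [Functor.comp_map]
      congr 1
    rw [heq]
    exact hF.1 _ _ hij'
  · -- colimits over directed subsets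
    intro J' hJ'
    set G := (Subtype.mono_coe (· ∈ J)).functor with hG
    set H := (Subtype.mono_coe (· ∈ J')).functor with hH
    set J'' : Set I := Subtype.val '' J' with hJ''def
    have hJ'' : DirectedSubset J'' := by
      rintro a ⟨a', ha', rfl⟩ b ⟨b', hb', rfl⟩
      obtain ⟨c, hc, hac, hbc⟩ := hJ' a' ha' b' hb'
      exact ⟨c.1, ⟨c, hc, rfl⟩, hac, hbc⟩
    -- the order isomorphism between `J'` (inside `J`) and its image `J''` in `I`
    let eOrd : ↥J' ≃o ↥J'' :=
      { toFun := fun x => ⟨x.1.1, ⟨x.1, x.2, rfl⟩⟩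
        invFun := fun y =>
          ⟨⟨y.1, by obtain ⟨a, ha, hav⟩ := y.2; exact hav ▸ a.2⟩, by
            obtain ⟨a, ha, hav⟩ := y.2
            have hae : a = ⟨y.1, hav ▸ a.2⟩ := Subtype.ext hav
            exact hae ▸ ha⟩
        left_inv := fun x => Subtype.ext (Subtype.ext rfl)
        right_inv := fun y => Subtype.ext rfl
        map_rel_iff' := Iff.rfl }
    let eq : ↥J' ≌ ↥J'' := eOrd.equivalence
    set K := (Subtype.mono_coe (· ∈ J'')).functor with hK
    have hcomp : H ⋙ G = eq.functor ⋙ K := by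
      refine CategoryTheory.Functor.ext (fun x => rfl) (fun x y f' => Subsingleton.elim _ _)
    have key : E.AdmMono (colimit.pre F (H ⋙ G)) := by
      rw [hcomp, ← colimit.pre_pre]
      exact E.admMono_comp (E.admMono_of_isIso hwic _) (hF.2 J'' hJ'')
    have key2 : colimit.pre (G ⋙ F) H ≫ colimit.pre F G = colimit.pre F (H ⋙ G) :=
      colimit.pre_pre F G H
    exact E.obscure hwic _ _ (by rw [key2]; exact key)
end

section
/- Let E be an exact category with kernels, and let I : E → A be an exact fully faithful functor into an abelian category that reflects exactness and preserves all kernels that exist in E. Then for every n, the left truncation functor τ^L_{≥n} : Ch(E) → Ch(E) preserves quasi-isomorphisms. -/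
open CategoryTheory Limits

universe v u

open ExactStr

/-- Let `E` be an exact category with kernels and `I : E ⥤ A` an exact fully
faithful functor into an abelian category which reflects exactness and preserves all kernels.
Then for every `n`, the left truncation functor `τ^L_{≥ n} : Ch(E) → Ch(E)` (here axiomatized
as any endofunctor `T` with a natural transformation `ψ : T ⟶ 𝟭` which is degreewise an
isomorphism in degrees `> n`, has `T X` zero in degrees `< n`, and is a kernel of the
differential in degree `n`) preserves quasi-isomorphisms, where a chain map in `E` is a
quasi-isomorphism iff its image under `I` is one. -/
theorem truncation_preserves_qiso
    {C : Type u} [Category.{v} C] [Preadditive C] [HasKernels C]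
    (E : ExactStr C)
    {A : Type u} [Category.{v} A] [Abelian A]
    (I : C ⥤ A) [I.Additive] [I.Full] [I.Faithful]
    -- `I` is exact:
    (hex : ∀ ⦃X Y Z : C⦄ (f : X ⟶ Y) (g : Y ⟶ Z) (h : E.ses f g),
      (ShortComplex.mk (I.map f) (I.map g)
        (by rw [← I.map_comp, E.comp_zero h, I.map_zero])).ShortExact)
    -- `I` reflects exactness:
    (hrefl : ∀ ⦃X Y Z : C⦄ (f : X ⟶ Y) (g : Y ⟶ Z) (w : f ≫ g = 0),
      (ShortComplex.mk (I.map f) (I.map g)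
        (by rw [← I.map_comp, w, I.map_zero])).ShortExact → E.ses f g)
    -- `I` preserves all kernels which exist:
    (hker : ∀ ⦃X Y : C⦄ (f : X ⟶ Y), Nonempty (PreservesLimit (parallelPair f 0) I))
    -- the truncation functor:
    (n : ℤ)
    (T : ChainComplex C ℤ ⥤ ChainComplex C ℤ) (ψ : T ⟶ 𝟭 (ChainComplex C ℤ))
    (hiso : ∀ (X : ChainComplex C ℤ) (m : ℤ), n < m → IsIso ((ψ.app X).f m))
    (hzero : ∀ (X : ChainComplex C ℤ) (m : ℤ), m < n → IsZero ((T.obj X).X m))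
    (hkerτ : ∀ (X : ChainComplex C ℤ) (w : (ψ.app X).f n ≫ X.d n (n - 1) = 0),
      Nonempty (IsLimit (KernelFork.ofι ((ψ.app X).f n) w)))
    -- a quasi-isomorphism (image under `I` is a quasi-isomorphism):
    {X Y : ChainComplex C ℤ} (f : X ⟶ Y)
    (hf : QuasiIso ((I.mapHomologicalComplex (ComplexShape.down ℤ)).map f)) :
    QuasiIso ((I.mapHomologicalComplex (ComplexShape.down ℤ)).map (T.map f)) := by
  set F := I.mapHomologicalComplex (ComplexShape.down ℤ) with hFdef
  -- exactness of `F.obj (T.obj W)` in degrees `< n`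
  have hTzero : ∀ (W : ChainComplex C ℤ) (m : ℤ), m < n → (F.obj (T.obj W)).ExactAt m := by
    intro W m hm
    rw [HomologicalComplex.exactAt_iff]
    exact ShortComplex.exact_of_isZero_X₂ _ (I.map_isZero (hzero W m hm))
  -- key fact: `F.map (ψ.app W)` is a quasi-isomorphism in every degree `≥ n`
  have key : ∀ (W : ChainComplex C ℤ) (m : ℤ), n ≤ m → QuasiIsoAt (F.map (ψ.app W)) m := by
    intro W m hm
    rw [quasiIsoAt_iff' _ (m + 1) m (m - 1) (ChainComplex.prev ℤ m) (ChainComplex.next ℤ m)]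
    -- the kernel fork in degree n and its image
    have w : (ψ.app W).f n ≫ W.d n (n - 1) = 0 := by
      have hcm := (ψ.app W).comm n (n - 1)
      dsimp at hcm
      rw [hcm, (hzero W (n - 1) (by omega)).eq_of_tgt ((T.obj W).d n (n - 1)) 0, zero_comp]
    have wA : I.map ((ψ.app W).f n) ≫ I.map (W.d n (n - 1)) = 0 := by
      rw [← I.map_comp, w, I.map_zero]
    obtain ⟨hk⟩ := hkerτ W w
    haveI := (hker (W.d n (n - 1))).some
    have hkA : IsLimit (KernelFork.ofι (I.map ((ψ.app W).f n)) wA) :=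
      (KernelFork.ofι ((ψ.app W).f n) w).mapIsLimit hk I
    haveI monoκ : Mono (I.map ((ψ.app W).f n)) := mono_of_isLimit_fork hkA
    rcases eq_or_lt_of_le hm with rfl | hm'
    · -- the degree `n` case
      set φ := (HomologicalComplex.shortComplexFunctor' A (ComplexShape.down ℤ)
        (n + 1) n (n - 1)).map (F.map (ψ.app W)) with hφdef
      set S₁ := (F.obj (T.obj W)).sc' (n + 1) n (n - 1) with hS₁
      set S₂ := (F.obj W).sc' (n + 1) n (n - 1) with hS₂
      -- left homology data for S₂
      let f' : I.obj (W.X (n + 1)) ⟶ I.obj ((T.obj W).X n) := hkA.lift (KernelFork.ofι S₂.f S₂.zero)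
      have hf' : f' ≫ I.map ((ψ.app W).f n) = S₂.f := hkA.fac _ WalkingParallelPair.zero
      let h2 : S₂.LeftHomologyData :=
        { K := I.obj ((T.obj W).X n)
          H := cokernel f'
          i := I.map ((ψ.app W).f n)
          π := cokernel.π f'
          wi := wA
          hi := hkA
          wπ := cokernel.condition f'
          hπ := cokernelIsCokernel f' }
      -- left homology data for S₁
      have S₁g : S₁.g = 0 := (I.map_isZero (hzero W (n - 1) (by omega))).eq_of_tgt _ _
      haveI : IsIso (I.map ((ψ.app W).f (n + 1))) := by
        haveI := hiso W (n + 1) (by omega); infer_instance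
      have hrel : S₁.f = I.map ((ψ.app W).f (n + 1)) ≫ f' := by
        refine (cancel_mono (I.map ((ψ.app W).f n))).1 ?_
        show I.map ((T.obj W).d (n + 1) n) ≫ I.map ((ψ.app W).f n) =
          (I.map ((ψ.app W).f (n + 1)) ≫ f') ≫ I.map ((ψ.app W).f n)
        rw [Category.assoc, hf']
        show I.map ((T.obj W).d (n + 1) n) ≫ I.map ((ψ.app W).f n) =
          I.map ((ψ.app W).f (n + 1)) ≫ I.map (W.d (n + 1) n)
        rw [← I.map_comp, ← I.map_comp]
        congr 1
        exact ((ψ.app W).comm (n + 1) n).symm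
      have w1 : S₁.f ≫ cokernel.π f' = 0 := by
        rw [hrel]
        exact (Category.assoc _ _ _).trans
          ((congrArg _ (cokernel.condition f')).trans Limits.comp_zero)
      have hc : IsColimit (CokernelCofork.ofπ (cokernel.π f') w1) :=
        isCokernelEpiComp (cokernelIsCokernel f') (I.map ((ψ.app W).f (n + 1))) hrel
      let h1 : S₁.LeftHomologyData :=
        ShortComplex.LeftHomologyData.ofIsColimitCokernelCofork S₁ S₁g _ hc
      have hf'2 : h2.f' = f' := rfl
      -- the left homology map data
      let γ : ShortComplex.LeftHomologyMapData φ h1 h2 :=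
        { φK := 𝟙 _
          φH := 𝟙 _
          commi := by
            show 𝟙 _ ≫ I.map ((ψ.app W).f n) = 𝟙 _ ≫ I.map ((ψ.app W).f n)
            rfl
          commf' := by
            exact (Category.comp_id _).trans
              ((ShortComplex.LeftHomologyData.ofIsColimitCokernelCofork_f' _ _ _ _).trans hrel)
          commπ := by
            show (cokernel.π f') ≫ 𝟙 _ = 𝟙 _ ≫ cokernel.π f'
            rw [Category.comp_id, Category.id_comp] }
      rw [γ.quasiIso_iff]
      exact IsIso.id _
    · -- the degrees `> n`
      set φ := (HomologicalComplex.shortComplexFunctor' A (ComplexShape.down ℤ)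
        (m + 1) m (m - 1)).map (F.map (ψ.app W)) with hφdef
      haveI : IsIso φ.τ₁ := by
        show IsIso (I.map ((ψ.app W).f (m + 1)))
        haveI := hiso W (m + 1) (by omega); infer_instance
      haveI : IsIso φ.τ₂ := by
        show IsIso (I.map ((ψ.app W).f m))
        haveI := hiso W m hm'; infer_instance
      haveI : Mono φ.τ₃ := by
        show Mono (I.map ((ψ.app W).f (m - 1)))
        by_cases hmn : m - 1 = n
        · rw [hmn]; exact monoκ
        · haveI := hiso W (m - 1) (by omega); infer_instance
      haveI : Epi φ.τ₁ := inferInstance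
      exact ShortComplex.quasiIso_of_epi_of_isIso_of_mono φ
  -- conclusion
  rw [quasiIso_iff]
  intro i
  by_cases hi' : n ≤ i
  · haveI h1 : QuasiIsoAt (F.map (ψ.app X)) i := key X i hi'
    haveI h2 : QuasiIsoAt (F.map (ψ.app Y)) i := key Y i hi'
    haveI h3 : QuasiIsoAt (F.map f) i := hf.quasiIsoAt i
    have e : F.map (T.map f) ≫ F.map (ψ.app Y) = F.map (ψ.app X) ≫ F.map f := by
      rw [← F.map_comp, ← F.map_comp, ψ.naturality]
      rfl
    haveI : QuasiIsoAt (F.map (T.map f) ≫ F.map (ψ.app Y)) i := by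
      rw [e]; infer_instance
    exact quasiIsoAt_of_comp_right (F.map (T.map f)) (F.map (ψ.app Y)) i
  · rw [quasiIsoAt_iff_exactAt _ i (hTzero X i (by omega))]
    exact hTzero Y i (by omega)
end

section
/- Let E be a small weakly idempotent complete exact category in which ω^op-limits of inverse systems with admissible-epimorphism transition maps exist and are exact. Then the abelian category of sheaves on E (with the admissible-epimorphism topology) also has the property that ω^op-limits of inverse systems with epimorphism transition maps are exact; that is, the levelwise limit of a short exact sequence of such inverse systems of sheaves is a short exact sequence. -/
set_option maxHeartbeats 1600000
set_option synthInstance.maxHeartbeats 400000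
set_option linter.unusedVariables false
set_option linter.unusedSectionVars false


open CategoryTheory Limits

universe v u

-- ### auxiliary lemmas
namespace StmtAux

variable {C : Type u} [Category.{v} C] [Preadditive C] (Ex : ExactStr C)

lemma admEpi_id (hwic : Ex.WIC) (X : C) : Ex.AdmEpi (𝟙 X) := by
  obtain ⟨W, p, hses⟩ := hwic (𝟙 X) (𝟙 X) (Category.id_comp _)
  have hp0 : p = 0 := by simpa using Ex.comp_zero hses
  obtain ⟨hc⟩ := Ex.isCokernel hses
  have hW1 : (𝟙 W) = 0 := by
    refine Cofork.IsColimit.hom_ext hc ?_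
    simp [hp0]
  have hW : ∀ {T : C} (a : T ⟶ W), a = 0 := fun a => by
    rw [← Category.comp_id a, hW1, comp_zero]
  obtain ⟨W', p', hses'⟩ := hwic (𝟙 W) (𝟙 W) (Category.id_comp _)
  have hp'0 : p' = 0 := by simpa using Ex.comp_zero hses'
  have hadm_p' : Ex.AdmEpi p' := ⟨W, 𝟙 W, hses'⟩
  -- 𝟙 W is an admissible epi
  have pb1 : IsPullback (𝟙 W) (𝟙 W) p' (0 : W ⟶ W') := by
    refine IsPullback.of_isLimit (PullbackCone.IsLimit.mk (by simp [hp'0]) (fun s => s.snd)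
      (fun s => ?_) (fun s => ?_) (fun s m _ hm2 => ?_))
    · rw [Category.comp_id, hW s.snd, hW s.fst]
    · rw [Category.comp_id]
    · rw [Category.comp_id] at hm2; rw [hm2]
  have hadm_idW : Ex.AdmEpi (𝟙 W) := Ex.pullback_admEpi pb1 hadm_p'
  -- 𝟙 X is an admissible epi
  have pb2 : IsPullback (0 : X ⟶ W) (𝟙 X) (𝟙 W) (0 : X ⟶ W) := by
    refine IsPullback.of_isLimit (PullbackCone.IsLimit.mk (by simp) (fun s => s.snd)
      (fun s => ?_) (fun s => ?_) (fun s m _ hm2 => ?_))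
    · rw [comp_zero, hW s.fst]
    · rw [Category.comp_id]
    · rw [Category.comp_id] at hm2; rw [hm2]
  exact Ex.pullback_admEpi pb2 hadm_idW

lemma admEpi_of_isIso (hwic : Ex.WIC) {X Y : C} (f : X ⟶ Y) [IsIso f] : Ex.AdmEpi f := by
  have pb : IsPullback f f (𝟙 Y) (𝟙 Y) := by
    refine IsPullback.of_isLimit (PullbackCone.IsLimit.mk rfl
      (fun s => s.fst ≫ inv f) (fun s => ?_) (fun s => ?_) (fun s m hm1 _ => ?_)
      )
    · simp
    · have : s.fst = s.snd := by simpa using s.condition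
      simp [this]
    · rw [← hm1]; simp
  exact Ex.pullback_admEpi pb (admEpi_id Ex hwic Y)

end StmtAux

open Opposite

variable {E : Type u} [SmallCategory E] [Preadditive E]

/-- An inverse system over `ω` whose (successor) transition maps are admissible epimorphisms. -/
def AdmEpiSys (Ex : ExactStr E) (F : ℕᵒᵖ ⥤ E) : Prop :=
  ∀ n : ℕ, Ex.AdmEpi (F.map (homOfLE (Nat.le_succ n)).op)

namespace StmtAux

lemma natop_hom_eq {a b : ℕᵒᵖ} (f g : a ⟶ b) : f = g :=
  Quiver.Hom.unop_inj (Subsingleton.elim _ _)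

lemma admEpi_pi_zero (Ex : ExactStr E) (hwic : Ex.WIC)
    (hex : ∀ F : ℕᵒᵖ ⥤ E, AdmEpiSys Ex F → HasLimit F)
    (hcoelem : ∀ (F G H : ℕᵒᵖ ⥤ E) (α : F ⟶ G) (β : G ⟶ H)
      (hF : AdmEpiSys Ex F) (hG : AdmEpiSys Ex G) (hH : AdmEpiSys Ex H),
      (∀ n : ℕᵒᵖ, Ex.ses (α.app n) (β.app n)) →
      haveI := hex F hF; haveI := hex G hG; haveI := hex H hH
      Ex.ses (limMap α) (limMap β))
    (Cf : ℕᵒᵖ ⥤ E) (hC : AdmEpiSys Ex Cf) :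
    haveI := hex Cf hC
    Ex.AdmEpi (limit.π Cf (op 0)) := by
  haveI := hex Cf hC
  set C0 := Cf.obj (op 0) with hC0
  let Hc : ℕᵒᵖ ⥤ E := (Functor.const ℕᵒᵖ).obj C0
  have hHc : AdmEpiSys Ex Hc := by
    intro n
    simpa [Hc] using admEpi_id Ex hwic C0
  let β' : Cf ⟶ Hc :=
    { app := fun n => Cf.map (homOfLE (Nat.zero_le n.unop)).op
      naturality := fun m n f => by
        dsimp [Hc]
        rw [Category.comp_id, ← Functor.map_comp]
        exact congrArg Cf.map (natop_hom_eq _ _) }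
  have heq0 : β'.app (op 0) = 𝟙 C0 := by
    show Cf.map (homOfLE (Nat.zero_le 0)).op = 𝟙 _
    rw [show (homOfLE (Nat.zero_le 0)).op = 𝟙 (op 0) from natop_hom_eq _ _, Cf.map_id]
  have htm : ∀ n : ℕ, Cf.map (homOfLE (Nat.le_succ n)).op ≫ β'.app (op n) = β'.app (op (n+1)) := by
    intro n
    show Cf.map _ ≫ Cf.map _ = Cf.map _
    rw [← Functor.map_comp]
    exact congrArg Cf.map (natop_hom_eq _ _)
  have hβ' : ∀ n : ℕ, Ex.AdmEpi (β'.app (op n)) := by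
    intro n
    induction n with
    | zero => rw [heq0]; exact admEpi_id Ex hwic C0
    | succ n ih =>
      rw [← htm n]
      exact Ex.admEpi_comp (hC n) ih
  choose W i hses using hβ'
  let klim : ∀ n, IsLimit (KernelFork.ofι (i n) (Ex.comp_zero (hses n))) :=
    fun n => (Ex.isKernel (hses n)).some
  have hmono : ∀ n, Mono (i n) := fun n => mono_of_isLimit_fork (klim n)
  have hw0 : ∀ n, (i (n+1) ≫ Cf.map (homOfLE (Nat.le_succ n)).op) ≫ β'.app (op n) = 0 := by
    intro n
    rw [Category.assoc, htm n, Ex.comp_zero (hses (n+1))]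
  let w : ∀ n, W (n+1) ⟶ W n := fun n => (KernelFork.IsLimit.lift' (klim n) _ (hw0 n)).1
  have hwcomm : ∀ n, w n ≫ i n = i (n+1) ≫ Cf.map (homOfLE (Nat.le_succ n)).op := fun n =>
    (KernelFork.IsLimit.lift' (klim n) _ (hw0 n)).2
  have hwadm : ∀ n, Ex.AdmEpi (w n) := by
    intro n
    haveI := hmono n
    haveI := hmono (n+1)
    have hs0 : ∀ s : PullbackCone (Cf.map (homOfLE (Nat.le_succ n)).op) (i n),
        s.fst ≫ β'.app (op (n+1)) = 0 := by
      intro s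
      rw [← htm n, ← Category.assoc, s.condition, Category.assoc,
        Ex.comp_zero (hses n), comp_zero]
    have hLF : ∀ s : PullbackCone (Cf.map (homOfLE (Nat.le_succ n)).op) (i n),
        (KernelFork.IsLimit.lift' (klim (n+1)) s.fst (hs0 s)).1 ≫ i (n+1) = s.fst := fun s =>
      (KernelFork.IsLimit.lift' (klim (n+1)) s.fst (hs0 s)).2
    have pb : IsPullback (i (n+1)) (w n) (Cf.map (homOfLE (Nat.le_succ n)).op) (i n) := by
      refine IsPullback.of_isLimit (PullbackCone.IsLimit.mk (hwcomm n).symm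
        (fun s => (KernelFork.IsLimit.lift' (klim (n+1)) s.fst (hs0 s)).1)
        (fun s => hLF s)
        (fun s => ?_) (fun s m hm1 _ => ?_))
      · rw [← cancel_mono (i n), Category.assoc, hwcomm n, ← Category.assoc,
          hLF s, s.condition]
      · rw [← cancel_mono (i (n+1)), hLF s]
        exact hm1
    exact Ex.pullback_admEpi pb (hC n)
  let F : ℕᵒᵖ ⥤ E := Functor.ofOpSequence w
  have hFmap : ∀ n : ℕ, F.map (homOfLE (Nat.le_succ n)).op = w n := fun n =>
    Functor.ofOpSequence_map_homOfLE_succ w n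
  have hF : AdmEpiSys Ex F := by
    intro n
    rw [hFmap n]
    exact hwadm n
  let α' : F ⟶ Cf := NatTrans.ofOpSequence (fun n => i n) (by
    intro n
    rw [hFmap n]; exact hwcomm n)
  have hses' : ∀ n : ℕᵒᵖ, Ex.ses (α'.app n) (β'.app n) := fun n => hses n.unop
  haveI := hex F hF
  haveI := hex Hc hHc
  have main := hcoelem F Cf Hc α' β' hF hC hHc hses'
  -- the projection from the limit of the constant functor is an isomorphism
  let c0 : Cone Hc :=
    { pt := C0
      π := { app := fun n => 𝟙 C0
             naturality := fun a b f => by simp [Hc] } }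
  let hc0 : IsLimit c0 :=
    { lift := fun s => s.π.app (op 0)
      fac := fun s n => by
        have h1 : s.π.app (op 0) = s.π.app n := by
          simpa [Hc] using s.π.naturality ((homOfLE (Nat.zero_le n.unop)).op : n ⟶ op 0)
        exact (Category.comp_id (s.π.app (op 0))).trans h1
      uniq := fun s m hm => by simpa [c0] using hm (op 0) }
  have hiso : IsIso (limit.π Hc (op 0)) := by
    have h := IsLimit.conePointUniqueUpToIso_hom_comp (limit.isLimit Hc) hc0 (op 0)
    have h2 : (IsLimit.conePointUniqueUpToIso (limit.isLimit Hc) hc0).hom = limit.π Hc (op 0) := by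
      simpa [c0] using h
    rw [← h2]
    infer_instance
  have hfinal : limit.π Cf (op 0) = limMap β' ≫ limit.π Hc (op 0) := by
    rw [limMap_π β' (op 0), heq0, Category.comp_id]
  rw [hfinal]
  exact Ex.admEpi_comp ⟨_, _, main⟩ (admEpi_of_isIso Ex hwic _)

end StmtAux

namespace StmtAux

variable {J : GrothendieckTopology E}

lemma exists_adm_lift (Ex : ExactStr E)
    (hJ : ∀ (D : E) (S : Sieve D), S ∈ J D ↔ ∃ (C : E) (p : C ⟶ D), Ex.AdmEpi p ∧ S p)
    {F G : Sheaf J AddCommGrpCat.{u}} (φ : F ⟶ G) (hφ : Epi φ) (D : E) (s : G.val.obj (op D)) :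
    ∃ (C : E) (p : C ⟶ D), Ex.AdmEpi p ∧
      ∃ t : F.val.obj (op C), φ.hom.app (op C) t = G.val.map p.op s := by
  have hls : Sheaf.IsLocallySurjective φ :=
    (Sheaf.isLocallySurjective_iff_epi' AddCommGrpCat.{u} φ).2 hφ
  obtain ⟨Cc, p, hp, hmem⟩ := (hJ D _).1 (hls.imageSieve_mem s)
  obtain ⟨t, ht⟩ := hmem
  exact ⟨Cc, p, hp, t, ht⟩

lemma sections_exact {S : ShortComplex (Sheaf J AddCommGrpCat.{u})} (hS : S.ShortExact)
    (X : Eᵒᵖ) (d : S.X₂.val.obj X) (hd : S.g.hom.app X d = 0) :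
    ∃ k : S.X₁.val.obj X, S.f.hom.app X k = d := by
  letI : Abelian (Sheaf J AddCommGrpCat.{u}) := inferInstance
  let Φ : Sheaf J AddCommGrpCat.{u} ⥤ AddCommGrpCat.{u} :=
    sheafToPresheaf J _ ⋙ (evaluation Eᵒᵖ AddCommGrpCat.{u}).obj X
  haveI : (sheafToPresheaf J AddCommGrpCat.{u}).Additive := ⟨rfl⟩
  haveI : Φ.Additive := by unfold Φ; infer_instance
  haveI : PreservesLimit (parallelPair S.g 0) Φ := by
    haveI h1 : PreservesLimitsOfShape WalkingParallelPair (sheafToPresheaf J AddCommGrpCat.{u}) :=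
      inferInstance
    haveI h2 : PreservesLimitsOfShape WalkingParallelPair
        ((evaluation Eᵒᵖ AddCommGrpCat.{u}).obj X) := inferInstance
    exact (inferInstance :
      PreservesLimitsOfShape WalkingParallelPair Φ).preservesLimit
  have hex : (S.map Φ).Exact :=
    ShortComplex.Exact.map_of_mono_of_preservesKernel hS.exact Φ hS.mono_f inferInstance
  rw [ShortComplex.ab_exact_iff] at hex
  exact hex d hd

end StmtAux

/-- Let `E` be a small weakly idempotent complete exact category in which
`ωᵒᵖ`-limits of inverse systems with admissible-epimorphism transition maps exist and are
exact. Then the abelian category of sheaves on `E` (with the admissible-epimorphism topology)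
has exact `ωᵒᵖ`-limits of inverse systems with epimorphism transition maps: the levelwise
limit of a levelwise short exact sequence of such systems of sheaves is short exact. -/
theorem sheaf_coelementary
    (Ex : ExactStr E) (hwic : Ex.WIC)
    -- limits of admissible-epimorphism towers exist in `E` ...
    (hex : ∀ F : ℕᵒᵖ ⥤ E, AdmEpiSys Ex F → HasLimit F)
    -- ... and are exact:
    (hcoelem : ∀ (F G H : ℕᵒᵖ ⥤ E) (α : F ⟶ G) (β : G ⟶ H)
      (hF : AdmEpiSys Ex F) (hG : AdmEpiSys Ex G) (hH : AdmEpiSys Ex H),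
      (∀ n : ℕᵒᵖ, Ex.ses (α.app n) (β.app n)) →
      haveI := hex F hF; haveI := hex G hG; haveI := hex H hH
      Ex.ses (limMap α) (limMap β))
    -- the topology generated by single admissible epimorphisms:
    (J : GrothendieckTopology E)
    (hJ : ∀ (D : E) (S : Sieve D), S ∈ J D ↔ ∃ (C : E) (p : C ⟶ D), Ex.AdmEpi p ∧ S p)
    -- a levelwise short exact sequence of inverse systems of sheaves with epimorphic
    -- transition maps:
    (K G H : ℕᵒᵖ ⥤ Sheaf J AddCommGrpCat.{u}) (α : K ⟶ G) (β : G ⟶ H)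
    (hK : ∀ n : ℕ, Epi (K.map (homOfLE (Nat.le_succ n)).op))
    (hG : ∀ n : ℕ, Epi (G.map (homOfLE (Nat.le_succ n)).op))
    (hH : ∀ n : ℕ, Epi (H.map (homOfLE (Nat.le_succ n)).op))
    (hw : α ≫ β = 0)
    (hse : ∀ n : ℕᵒᵖ, (ShortComplex.mk (α.app n) (β.app n)
      (by rw [← NatTrans.comp_app, hw]; rfl)).ShortExact) :
    (ShortComplex.mk (limMap α) (limMap β)
      (by apply limit.hom_ext; intro n; simp [← NatTrans.comp_app, hw])).ShortExact := by
  classical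
  letI : Abelian (Sheaf J AddCommGrpCat.{u}) := inferInstance
  have happ : ∀ {A B Cc : Sheaf J AddCommGrpCat.{u}} (φ : A ⟶ B) (ψ : B ⟶ Cc) (X : Eᵒᵖ)
      (x : A.val.obj X), (φ ≫ ψ).hom.app X x = ψ.hom.app X (φ.hom.app X x) := by
    intro A B Cc φ ψ X x
    show (φ.hom ≫ ψ.hom).app X x = _
    simp
  have hsub : ∀ {A B : AddCommGrpCat.{u}} (φ : A ⟶ B) (x y : A), φ (x - y) = φ x - φ y := by
    intro A B φ x y
    exact AddMonoidHom.map_sub φ.hom x y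
  -- ## Part 1 : `limMap β` is an epimorphism
  have hepi : Epi (limMap β) := by
    have hls : Sheaf.IsLocallySurjective (limMap β) := by
      constructor
      intro D t
      rw [hJ]
      -- the compatible family of sections of the tower `H` associated to `t`
      set tn : ∀ n : ℕ, (H.obj (op n)).val.obj (op D) :=
        fun n => (limit.π H (op n)).hom.app (op D) t with htn_def
      have htcomp : ∀ n : ℕ,
          (H.map (homOfLE (Nat.le_succ n)).op).hom.app (op D) (tn (n+1)) = tn n := by
        intro n
        have h1 : (limit.π H (op (n+1)) ≫ H.map (homOfLE (Nat.le_succ n)).op).hom.app (op D) t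
            = (limit.π H (op n)).hom.app (op D) t := by
          rw [limit.w]
        rw [happ] at h1
        exact h1
      -- the key inductive step
      have key : ∀ (n : ℕ) (Cn : E) (f : Cn ⟶ D) (g : (G.obj (op n)).val.obj (op Cn)),
          (β.app (op n)).hom.app (op Cn) g = (H.obj (op n)).val.map f.op (tn n) →
          ∃ (C' : E) (q : C' ⟶ Cn) (g' : (G.obj (op (n+1))).val.obj (op C')),
            Ex.AdmEpi q ∧
            (β.app (op (n+1))).hom.app (op C') g' =
              (H.obj (op (n+1))).val.map (q ≫ f).op (tn (n+1)) ∧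
            (G.map (homOfLE (Nat.le_succ n)).op).hom.app (op C') g' =
              (G.obj (op n)).val.map q.op g := by
        intro n Cn f g hg
        obtain ⟨C', q', hq', g', hg'⟩ := StmtAux.exists_adm_lift Ex hJ (β.app (op (n+1)))
          (hse (op (n+1))).epi_g Cn ((H.obj (op (n+1))).val.map f.op (tn (n+1)))
        set d := (G.map (homOfLE (Nat.le_succ n)).op).hom.app (op C') g' -
          (G.obj (op n)).val.map q'.op g with hd_def
        have hβd : (β.app (op n)).hom.app (op C') d = 0 := by
          rw [hd_def, map_sub]
          have e1 : (β.app (op n)).hom.app (op C')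
              ((G.map (homOfLE (Nat.le_succ n)).op).hom.app (op C') g')
              = (H.map (homOfLE (Nat.le_succ n)).op).hom.app (op C')
                ((β.app (op (n+1))).hom.app (op C') g') := by
            have h2 : (G.map (homOfLE (Nat.le_succ n)).op ≫ β.app (op n)).hom.app (op C') g'
                = (β.app (op (n+1)) ≫ H.map (homOfLE (Nat.le_succ n)).op).hom.app (op C') g' := by
              rw [β.naturality]
            rw [happ, happ] at h2
            exact h2
          have e4 : (β.app (op n)).hom.app (op C') ((G.obj (op n)).val.map q'.op g)
              = (H.obj (op n)).val.map q'.op ((H.obj (op n)).val.map f.op (tn n)) := by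
            rw [NatTrans.naturality_apply, hg]
          rw [e1, hg', e4, NatTrans.naturality_apply, NatTrans.naturality_apply, htcomp n,
            sub_self]
        obtain ⟨k, hk⟩ := StmtAux.sections_exact (hse (op n)) (op C') d hβd
        obtain ⟨C'', q'', hq'', k', hk'⟩ := StmtAux.exists_adm_lift Ex hJ
          (K.map (homOfLE (Nat.le_succ n)).op) (hK n) C' k
        refine ⟨C'', q'' ≫ q',
          (G.obj (op (n+1))).val.map q''.op g' - (α.app (op (n+1))).hom.app (op C'') k',
          Ex.admEpi_comp hq'' hq', ?_, ?_⟩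
        · -- the lift maps to the restriction of `tn (n+1)`
          rw [map_sub]
          have e5 : (β.app (op (n+1))).hom.app (op C'')
              ((α.app (op (n+1))).hom.app (op C'') k') = 0 := by
            have hab : (α.app (op (n+1)) ≫ β.app (op (n+1))).hom.app (op C'') k' = 0 := by
              rw [← NatTrans.comp_app, hw]
              rfl
            rw [happ] at hab
            exact hab
          rw [e5, sub_zero, NatTrans.naturality_apply, hg']
          rw [op_comp, op_comp, Functor.map_comp, Functor.map_comp]
          rw [comp_apply, comp_apply]
        · -- compatibility with the previous lift
          have hk2 : (α.app (op n)).hom.app (op C') k = d := hk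
          rw [map_sub]
          have e6 : (G.map (homOfLE (Nat.le_succ n)).op).hom.app (op C'')
              ((α.app (op (n+1))).hom.app (op C'') k')
              = (α.app (op n)).hom.app (op C'')
                ((K.map (homOfLE (Nat.le_succ n)).op).hom.app (op C'') k') := by
            have h2 : (α.app (op (n+1)) ≫ G.map (homOfLE (Nat.le_succ n)).op).hom.app (op C'') k'
                = (K.map (homOfLE (Nat.le_succ n)).op ≫ α.app (op n)).hom.app (op C'') k' := by
              rw [α.naturality]
            rw [happ, happ] at h2
            exact h2
          rw [NatTrans.naturality_apply, e6, hk', NatTrans.naturality_apply, hk2]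
          have e7 : (G.map (homOfLE (Nat.le_succ n)).op).hom.app (op C') g' - d
              = (G.obj (op n)).val.map q'.op g := by
            rw [hd_def]
            abel
          have e8 := hsub ((G.obj (op n)).val.map q''.op)
            ((G.map (homOfLE (Nat.le_succ n)).op).hom.app (op C') g') d
          rw [e7] at e8
          rw [← e8, op_comp, Functor.map_comp, comp_apply]
      -- base of the induction
      obtain ⟨C0, f0, hf0, g0, hg0⟩ := StmtAux.exists_adm_lift Ex hJ (β.app (op 0))
        (hse (op 0)).epi_g D (tn 0)
      -- the chain of covers
      let P : ℕ → Type u := fun n => Σ' (Cn : E) (f : Cn ⟶ D)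
        (g : (G.obj (op n)).val.obj (op Cn)),
        (β.app (op n)).hom.app (op Cn) g = (H.obj (op n)).val.map f.op (tn n)
      let step : ∀ (n : ℕ) (x : P n), Σ' (y : P (n+1)) (q : y.1 ⟶ x.1),
          Ex.AdmEpi q ∧ y.2.1 = q ≫ x.2.1 ∧
          (G.map (homOfLE (Nat.le_succ n)).op).hom.app (op y.1) y.2.2.1 =
            (G.obj (op n)).val.map q.op x.2.2.1 := fun n x => by
        have hne : Nonempty (Σ' (y : P (n+1)) (q : y.1 ⟶ x.1),
            Ex.AdmEpi q ∧ y.2.1 = q ≫ x.2.1 ∧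
            (G.map (homOfLE (Nat.le_succ n)).op).hom.app (op y.1) y.2.2.1 =
              (G.obj (op n)).val.map q.op x.2.2.1) := by
          obtain ⟨C', q, g', hq, h1, h2⟩ := key n x.1 x.2.1 x.2.2.1 x.2.2.2
          exact ⟨⟨⟨C', q ≫ x.2.1, g', h1⟩, q, hq, rfl, h2⟩⟩
        exact hne.some
      let seq : ∀ n, P n := fun n => Nat.rec ⟨C0, f0, g0, hg0⟩ (fun n ih => (step n ih).1) n
      let q : ∀ n, (seq (n+1)).1 ⟶ (seq n).1 := fun n => (step n (seq n)).2.1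
      have hq : ∀ n, Ex.AdmEpi (q n) := fun n => (step n (seq n)).2.2.1
      have hfsucc : ∀ n, (seq (n+1)).2.1 = q n ≫ (seq n).2.1 :=
        fun n => (step n (seq n)).2.2.2.1
      have hgsucc : ∀ n, (G.map (homOfLE (Nat.le_succ n)).op).hom.app
          (op (seq (n+1)).1) (seq (n+1)).2.2.1 =
          (G.obj (op n)).val.map (q n).op (seq n).2.2.1 :=
        fun n => (step n (seq n)).2.2.2.2
      -- the tower of covers and its limit
      let Cf : ℕᵒᵖ ⥤ E := Functor.ofOpSequence (X := fun n => (seq n).1) q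
      have hmap : ∀ n : ℕ, Cf.map (homOfLE (Nat.le_succ n)).op = q n :=
        fun n => Functor.ofOpSequence_map_homOfLE_succ (X := fun k => (seq k).1) q n
      have hCf : AdmEpiSys Ex Cf := fun n => by rw [hmap n]; exact hq n
      haveI := hex Cf hCf
      have hπadm : Ex.AdmEpi (limit.π Cf (op 0)) :=
        StmtAux.admEpi_pi_zero Ex hwic hex hcoelem Cf hCf
      let pr : ∀ n : ℕ, limit Cf ⟶ (seq n).1 := fun n => limit.π Cf (op n)
      have hpr : ∀ n, pr (n+1) ≫ q n = pr n := by
        intro n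
        rw [show q n = Cf.map (homOfLE (Nat.le_succ n)).op from (hmap n).symm]
        exact limit.w Cf _
      have hπf : ∀ n, pr n ≫ (seq n).2.1 = pr 0 ≫ (seq 0).2.1 := by
        intro n
        induction n with
        | zero => rfl
        | succ n ih => rw [hfsucc n, ← Category.assoc, hpr n, ih]
      let fω : limit Cf ⟶ D := pr 0 ≫ (seq 0).2.1
      have hfωadm : Ex.AdmEpi fω := Ex.admEpi_comp hπadm hf0
      -- the compatible family of local lifts over the limit of the covers
      let a : ∀ n : ℕ, (G.obj (op n)).val.obj (op (limit Cf)) :=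
        fun n => (G.obj (op n)).val.map (pr n).op (seq n).2.2.1
      have hacomp : ∀ n : ℕ,
          (G.map (homOfLE (Nat.le_succ n)).op).hom.app (op (limit Cf)) (a (n+1)) = a n := by
        intro n
        show (G.map (homOfLE (Nat.le_succ n)).op).hom.app (op (limit Cf))
          ((G.obj (op (n+1))).val.map (pr (n+1)).op (seq (n+1)).2.2.1) = _
        rw [NatTrans.naturality_apply, hgsucc n]
        show ((G.obj (op n)).val.map (q n).op ≫ (G.obj (op n)).val.map (pr (n+1)).op)
          (seq n).2.2.1 = _
        rw [← Functor.map_comp, ← op_comp, hpr n]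
      have hall : ∀ (m k : ℕ) (h : k ≤ m),
          (G.map (homOfLE h).op).hom.app (op (limit Cf)) (a m) = a k := by
        intro m k h
        induction m, h using Nat.le_induction with
        | base =>
          rw [show (homOfLE (le_refl k)).op = 𝟙 (op k) from StmtAux.natop_hom_eq _ _,
            CategoryTheory.Functor.map_id]
          rfl
        | succ m hm ih =>
          rw [show ((homOfLE (by omega : k ≤ m + 1)).op : op (m+1) ⟶ op k) =
            ((homOfLE (Nat.le_succ m)).op ≫ (homOfLE hm).op : op (m+1) ⟶ op k) from
            StmtAux.natop_hom_eq _ _, Functor.map_comp, happ, hacomp m, ih]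
      -- sections of the limit sheaf of types
      let ΦT : Sheaf J AddCommGrpCat.{u} ⥤ Type u :=
        sheafToPresheaf J AddCommGrpCat.{u} ⋙ (evaluation Eᵒᵖ AddCommGrpCat.{u}).obj (op (limit Cf))
          ⋙ forget AddCommGrpCat.{u}
      haveI : PreservesLimitsOfShape ℕᵒᵖ ΦT := by
        haveI h1 : PreservesLimitsOfShape ℕᵒᵖ (sheafToPresheaf J AddCommGrpCat.{u}) :=
          inferInstance
        haveI h2 : PreservesLimitsOfShape ℕᵒᵖ
          ((evaluation Eᵒᵖ AddCommGrpCat.{u}).obj (op (limit Cf))) := inferInstance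
        haveI h3 : PreservesLimitsOfShape ℕᵒᵖ (forget AddCommGrpCat.{u}) := inferInstance
        infer_instance
      let hcG : IsLimit (ΦT.mapCone (limit.cone G)) := isLimitOfPreserves ΦT (limit.isLimit G)
      let eG := Types.isLimitEquivSections hcG
      let sec : (G ⋙ ΦT).sections := by
        refine ⟨fun j => a j.unop, ?_⟩
        intro j j' fj
        rw [show fj = (homOfLE (leOfHom fj.unop)).op from StmtAux.natop_hom_eq _ _]
        exact hall j.unop j'.unop (leOfHom fj.unop)
      let gω := eG.symm sec
      have hgω : ∀ n : ℕ, (limit.π G (op n)).hom.app (op (limit Cf)) gω = a n := by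
        intro n
        exact Types.isLimitEquivSections_symm_apply hcG sec (op n)
      -- conclusion
      refine ⟨limit Cf, fω, hfωadm, gω, ?_⟩
      -- compare both sides inside the limit of `H`
      let hcH : IsLimit (ΦT.mapCone (limit.cone H)) := isLimitOfPreserves ΦT (limit.isLimit H)
      let eH := Types.isLimitEquivSections hcH
      have hinj : ∀ x y : (limit H).val.obj (op (limit Cf)),
          (∀ j : ℕᵒᵖ, (limit.π H j).hom.app (op (limit Cf)) x =
            (limit.π H j).hom.app (op (limit Cf)) y) → x = y := by
        intro x y h
        exact eH.injective (Subtype.ext (funext fun j => h j))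
      apply hinj
      intro j
      obtain ⟨m⟩ := j
      -- left hand side
      have lhs1 : (limit.π H (op m)).hom.app (op (limit Cf))
          ((limMap β).hom.app (op (limit Cf)) gω)
          = (β.app (op m)).hom.app (op (limit Cf))
            ((limit.π G (op m)).hom.app (op (limit Cf)) gω) := by
        have h2 : (limMap β ≫ limit.π H (op m)).hom.app (op (limit Cf)) gω
            = (limit.π G (op m) ≫ β.app (op m)).hom.app (op (limit Cf)) gω := by
          rw [limMap_π]
        rw [happ, happ] at h2
        exact h2
      rw [lhs1, hgω m]
      show (β.app (op m)).hom.app (op (limit Cf))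
        ((G.obj (op m)).val.map (pr m).op (seq m).2.2.1) = _
      rw [NatTrans.naturality_apply, (seq m).2.2.2]
      have l2 : (H.obj (op m)).val.map (pr m).op
          ((H.obj (op m)).val.map ((seq m).2.1).op (tn m))
          = (H.obj (op m)).val.map (pr m ≫ (seq m).2.1).op (tn m) := by
        rw [op_comp, Functor.map_comp, comp_apply]
      rw [l2, hπf m]
      have r1 : (limit.π H (op m)).hom.app (op (limit Cf)) ((limit H).val.map fω.op t)
          = (H.obj (op m)).val.map fω.op ((limit.π H (op m)).hom.app (op D) t) :=
        NatTrans.naturality_apply (limit.π H (op m)).hom fω.op t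
      rw [r1]
    exact (Sheaf.isLocallySurjective_iff_epi' AddCommGrpCat.{u} (limMap β)).1 hls
  -- ## Part 2 : `limMap α` is a kernel of `limMap β`
  have hzero : limMap α ≫ limMap β = 0 := by
    apply limit.hom_ext
    intro n
    simp [← NatTrans.comp_app, hw]
  have hπβ : ∀ (T : Sheaf J AddCommGrpCat.{u}) (k : T ⟶ limit G), k ≫ limMap β = 0 →
      ∀ n : ℕᵒᵖ, (k ≫ limit.π G n) ≫ β.app n = 0 := by
    intro T k hk n
    rw [Category.assoc, ← limMap_π β n, ← Category.assoc, hk, zero_comp]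
  have hmono : ∀ n : ℕᵒᵖ, Mono (α.app n) := fun n => (hse n).mono_f
  have hl : ∀ {T : Sheaf J AddCommGrpCat.{u}} (k : T ⟶ limit G) (_ : k ≫ limMap β = 0) (n : ℕᵒᵖ),
      {l : T ⟶ K.obj n // l ≫ α.app n = k ≫ limit.π G n} :=
    fun {T} k hk n => ⟨(KernelFork.IsLimit.lift' (hse n).fIsKernel (k ≫ limit.π G n)
      (hπβ T k hk n)).1, (KernelFork.IsLimit.lift' (hse n).fIsKernel (k ≫ limit.π G n)
      (hπβ T k hk n)).2⟩
  have hlnat : ∀ {T : Sheaf J AddCommGrpCat.{u}} (k : T ⟶ limit G) (hk : k ≫ limMap β = 0)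
      {m n : ℕᵒᵖ} (fj : m ⟶ n),
      ((Functor.const ℕᵒᵖ).obj T).map fj ≫ (hl k hk n).1 = (hl k hk m).1 ≫ K.map fj := by
    intro T k hk m n fj
    haveI := hmono n
    have h2 : (hl k hk m).1 ≫ K.map fj = (hl k hk n).1 := by
      rw [← cancel_mono (α.app n), (hl k hk n).2, Category.assoc, α.naturality fj,
        ← Category.assoc, (hl k hk m).2, Category.assoc, limit.w G fj]
    calc ((Functor.const ℕᵒᵖ).obj T).map fj ≫ (hl k hk n).1
        = 𝟙 T ≫ (hl k hk n).1 := rfl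
      _ = (hl k hk n).1 := Category.id_comp _
      _ = (hl k hk m).1 ≫ K.map fj := h2.symm
  have klim : IsLimit (KernelFork.ofι (limMap α) hzero) := by
    refine KernelFork.IsLimit.ofι _ _
      (fun {T} k hk => limit.lift K
        { pt := T
          π := { app := fun n => (hl k hk n).1
                 naturality := fun {m n} fj => hlnat k hk fj } }) ?_ ?_
    · intro T k hk
      apply limit.hom_ext
      intro n
      rw [Category.assoc, limMap_π α n, ← Category.assoc, limit.lift_π]
      exact (hl k hk n).2
    · intro T k hk m' hm'
      apply limit.hom_ext
      intro n
      rw [limit.lift_π]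
      haveI := hmono n
      rw [← cancel_mono (α.app n), (hl k hk n).2, Category.assoc, ← limMap_π α n,
        ← Category.assoc, hm']
  haveI hmonoL : Mono (limMap α) := mono_of_isLimit_fork klim
  exact { exact := ShortComplex.exact_of_f_is_kernel _ klim, mono_f := hmonoL, epi_g := hepi }
end

section
/- Let R be a semi-normed ring. Then the category sNorm_R of semi-normed R-modules with bounded R-linear maps has enough projectives, given functorially by P(M) = (⊕^{≤1}_{m : ρ(m)≠0} R_{ρ(m)}) ⊕ (⊕^{≤1}_{m : ρ(m)=0} R^{→0}), with the evident evaluation map P(M) → M being an admissible epimorphism. -/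
open CategoryTheory

/-- A semi-normed module over a semi-normed (commutative) ring `R`: a module with a
semi-norm `‖·‖` satisfying `‖r • m‖ ≤ C * ‖r‖ * ‖m‖` for some constant `C`. -/
structure SNormMod (R : Type) [SeminormedCommRing R] : Type 1 where
  carrier : Type
  [snorm : SeminormedAddCommGroup carrier]
  [mod : Module R carrier]
  bound : ∃ C : ℝ, ∀ (r : R) (m : carrier), ‖r • m‖ ≤ C * ‖r‖ * ‖m‖

attribute [instance] SNormMod.snorm SNormMod.mod

variable {R : Type} [SeminormedCommRing R]

/-- Bounded `R`-linear maps between semi-normed `R`-modules. -/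
@[ext]
structure BddHom (M N : SNormMod R) where
  toLinear : M.carrier →ₗ[R] N.carrier
  bdd : ∃ C : ℝ, ∀ m : M.carrier, ‖toLinear m‖ ≤ C * ‖m‖

/-- The category `sNorm_R` of semi-normed `R`-modules and bounded `R`-linear maps. -/
instance : Category (SNormMod R) where
  Hom := BddHom
  id M := ⟨LinearMap.id, ⟨1, fun m => by simp⟩⟩
  comp {M N P} f g := ⟨g.toLinear.comp f.toLinear, by
    obtain ⟨Cf, hf⟩ := f.bdd
    obtain ⟨Cg, hg⟩ := g.bdd
    refine ⟨max Cg 0 * Cf, fun m => ?_⟩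
    calc ‖g.toLinear (f.toLinear m)‖ ≤ Cg * ‖f.toLinear m‖ := hg _
      _ ≤ max Cg 0 * ‖f.toLinear m‖ :=
        mul_le_mul_of_nonneg_right (le_max_left _ _) (norm_nonneg _)
      _ ≤ max Cg 0 * (Cf * ‖m‖) := mul_le_mul_of_nonneg_left (hf m) (le_max_right _ _)
      _ = max Cg 0 * Cf * ‖m‖ := (mul_assoc _ _ _).symm⟩
  id_comp f := BddHom.ext (f.toLinear.comp_id)
  comp_id f := BddHom.ext (f.toLinear.id_comp)
  assoc f g h := BddHom.ext rfl

/-- Admissible epimorphisms in `sNorm_R`: bounded surjections admitting a bound on the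
norms of preimages (up to `ε`). -/
def AdmEpiSN {M N : SNormMod R} (f : M ⟶ N) : Prop :=
  ∃ C : ℝ, ∀ (n : N.carrier) (ε : ℝ), 0 < ε →
    ∃ m : M.carrier, f.toLinear m = n ∧ ‖m‖ ≤ C * ‖n‖ + ε

/-- Projective objects of `sNorm_R`: objects whose maps lift along admissible epimorphisms. -/
def ProjSN (P : SNormMod R) : Prop :=
  ∀ ⦃M N : SNormMod R⦄ (g : M ⟶ N), AdmEpiSN g → ∀ h : P ⟶ N, ∃ k : P ⟶ M, k ≫ g = h

section Aux
open Finsupp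

-- weight
noncomputable def wt (M : SNormMod R) (x : M.carrier × ℕ) : ℝ := ‖x.1‖ + (1/2)^x.2

lemma wt_pos (M : SNormMod R) (x : M.carrier × ℕ) : 0 < wt M x :=
  add_pos_of_nonneg_of_pos (norm_nonneg _) (by positivity)

abbrev PCarrier (M : SNormMod R) : Type := (M.carrier × ℕ) →₀ R

noncomputable def pnorm {M : SNormMod R} (f : PCarrier M) : ℝ :=
  f.sum fun x r => ‖r‖ * wt M x

lemma pnorm_eq_sum {M : SNormMod R} (f : PCarrier M) (s : Finset (M.carrier × ℕ))
    (hs : f.support ⊆ s) : pnorm f = ∑ x ∈ s, ‖f x‖ * wt M x :=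
  Finsupp.sum_of_support_subset f hs _ (fun x _ => by simp)

lemma pnorm_nonneg {M : SNormMod R} (f : PCarrier M) : 0 ≤ pnorm f :=
  Finset.sum_nonneg fun x _ => mul_nonneg (norm_nonneg _) (wt_pos M x).le

lemma pnorm_zero {M : SNormMod R} : pnorm (0 : PCarrier M) = 0 := by
  simp [pnorm]

lemma pnorm_add {M : SNormMod R} (f g : PCarrier M) :
    pnorm (f + g) ≤ pnorm f + pnorm g := by
  classical
  rw [pnorm_eq_sum (f+g) (f.support ∪ g.support) (Finsupp.support_add),
    pnorm_eq_sum f (f.support ∪ g.support) Finset.subset_union_left,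
    pnorm_eq_sum g (f.support ∪ g.support) Finset.subset_union_right,
    ← Finset.sum_add_distrib]
  refine Finset.sum_le_sum fun x _ => ?_
  rw [← add_mul]
  exact mul_le_mul_of_nonneg_right (norm_add_le _ _) (wt_pos M x).le

lemma pnorm_neg {M : SNormMod R} (f : PCarrier M) : pnorm (-f) = pnorm f := by
  rw [pnorm_eq_sum (-f) f.support (by simp [Finsupp.support_neg]),
    pnorm_eq_sum f f.support subset_rfl]
  exact Finset.sum_congr rfl fun x _ => by simp

noncomputable instance Psn (M : SNormMod R) : SeminormedAddCommGroup (PCarrier M) where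
  norm := pnorm
  dist f g := pnorm (f - g)
  dist_self f := by simp [pnorm_zero]
  dist_comm f g := by show pnorm _ = pnorm _; rw [← pnorm_neg (f - g), neg_sub]
  dist_triangle f g h := by
    show pnorm _ ≤ pnorm _ + pnorm _
    have : f - h = (f - g) + (g - h) := by abel
    rw [this]; exact pnorm_add _ _
  edist_dist f g := rfl
  dist_eq f g := by show pnorm _ = pnorm _; rw [← pnorm_neg (f - g), neg_sub, sub_eq_neg_add]

lemma pnorm_smul {M : SNormMod R} (r : R) (f : PCarrier M) :
    ‖r • f‖ ≤ ‖r‖ * ‖f‖ := by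
  show pnorm _ ≤ ‖r‖ * pnorm f
  rw [pnorm_eq_sum (r • f) f.support Finsupp.support_smul,
    pnorm_eq_sum f f.support subset_rfl, Finset.mul_sum]
  refine Finset.sum_le_sum fun x _ => ?_
  rw [← mul_assoc]
  refine mul_le_mul_of_nonneg_right ?_ (wt_pos M x).le
  simpa [smul_eq_mul] using norm_mul_le r (f x)

lemma pnorm_single {M : SNormMod R} (x : M.carrier × ℕ) (r : R) :
    ‖(Finsupp.single x r : PCarrier M)‖ = ‖r‖ * wt M x := by
  show pnorm _ = _
  by_cases hr : r = 0
  · simp [hr, pnorm_zero]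
  · rw [pnorm, Finsupp.sum_single_index (by simp)]

noncomputable abbrev Pobj (M : SNormMod R) : SNormMod R where
  carrier := PCarrier M
  bound := ⟨1, fun r f => by simpa using pnorm_smul r f⟩

noncomputable def evalL (M : SNormMod R) : PCarrier M →ₗ[R] M.carrier :=
  Finsupp.lsum R fun x => LinearMap.toSpanSingleton R M.carrier x.1

lemma lsum_span_apply (M A : SNormMod R) (a : M.carrier × ℕ → A.carrier) (f : PCarrier M) :
    (Finsupp.lsum R fun x => LinearMap.toSpanSingleton R A.carrier (a x)) f
      = ∑ x ∈ f.support, f x • a x := by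
  simp [Finsupp.lsum_apply, Finsupp.sum, LinearMap.toSpanSingleton_apply]

lemma lsum_span_bdd (M A : SNormMod R) (a : M.carrier × ℕ → A.carrier) (K : ℝ)
    (hK : ∀ x, ‖a x‖ ≤ K * wt M x) :
    ∃ C : ℝ, ∀ f : PCarrier M,
      ‖(Finsupp.lsum R fun x => LinearMap.toSpanSingleton R A.carrier (a x)) f‖ ≤ C * ‖f‖ := by
  obtain ⟨CA, hCA⟩ := A.bound
  refine ⟨max CA 0 * max K 0, fun f => ?_⟩
  rw [lsum_span_apply]
  calc ‖∑ x ∈ f.support, f x • a x‖ ≤ ∑ x ∈ f.support, ‖f x • a x‖ := norm_sum_le _ _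
    _ ≤ ∑ x ∈ f.support, max CA 0 * max K 0 * (‖f x‖ * wt M x) := by
        refine Finset.sum_le_sum fun x _ => ?_
        have h1 : ‖f x • a x‖ ≤ max CA 0 * ‖f x‖ * ‖a x‖ :=
          le_trans (hCA _ _) (by
            refine mul_le_mul_of_nonneg_right (mul_le_mul_of_nonneg_right
              (le_max_left _ _) (norm_nonneg _)) (norm_nonneg _))
        have h2 : ‖a x‖ ≤ max K 0 * wt M x :=
          le_trans (hK x) (mul_le_mul_of_nonneg_right (le_max_left _ _) (wt_pos M x).le)
        calc ‖f x • a x‖ ≤ max CA 0 * ‖f x‖ * ‖a x‖ := h1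
          _ ≤ max CA 0 * ‖f x‖ * (max K 0 * wt M x) := by
              refine mul_le_mul_of_nonneg_left h2 ?_
              positivity
          _ = max CA 0 * max K 0 * (‖f x‖ * wt M x) := by ring
    _ = max CA 0 * max K 0 * ‖f‖ := by
        rw [show (‖f‖ : ℝ) = pnorm f from rfl, pnorm_eq_sum f f.support subset_rfl,
          Finset.mul_sum]

lemma evalL_bdd (M : SNormMod R) : ∃ C : ℝ, ∀ f : PCarrier M, ‖evalL M f‖ ≤ C * ‖f‖ :=
  lsum_span_bdd M M (fun x => x.1) 1
    (fun x => by rw [one_mul, wt]; exact le_add_of_nonneg_right (by positivity : (0:ℝ) ≤ (1/2)^x.2))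

noncomputable def PF : SNormMod R ⥤ SNormMod R where
  obj := Pobj
  map {M N} f := ⟨Finsupp.lmapDomain R R (fun x => (f.toLinear x.1, x.2)), by
    obtain ⟨Cf, hCf⟩ := f.bdd
    refine ⟨max Cf 1, fun v => ?_⟩
    have hmap : Finsupp.lmapDomain R R (fun x : M.carrier × ℕ => (f.toLinear x.1, x.2)) v
        = ∑ x ∈ v.support, Finsupp.single ((f.toLinear x.1, x.2) : N.carrier × ℕ) (v x) := by
      simp [Finsupp.lmapDomain_apply, Finsupp.mapDomain, Finsupp.sum]
    rw [hmap]
    calc ‖∑ x ∈ v.support, Finsupp.single ((f.toLinear x.1, x.2) : N.carrier × ℕ) (v x)‖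
        ≤ ∑ x ∈ v.support, ‖(Finsupp.single ((f.toLinear x.1, x.2) : N.carrier × ℕ) (v x) :
            PCarrier N)‖ := norm_sum_le _ _
      _ ≤ ∑ x ∈ v.support, max Cf 1 * (‖v x‖ * wt M x) := by
          refine Finset.sum_le_sum fun x _ => ?_
          rw [pnorm_single]
          have h1 : wt N (f.toLinear x.1, x.2) ≤ max Cf 1 * wt M x := by
            have := hCf x.1
            have h2 : (1:ℝ) * (1/2)^x.2 ≤ max Cf 1 * (1/2)^x.2 :=
              mul_le_mul_of_nonneg_right (le_max_right _ _) (by positivity)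
            have h3 : ‖f.toLinear x.1‖ ≤ max Cf 1 * ‖x.1‖ :=
              le_trans this (mul_le_mul_of_nonneg_right (le_max_left _ _) (norm_nonneg _))
            simp only [wt]
            nlinarith
          calc ‖v x‖ * wt N (f.toLinear x.1, x.2) ≤ ‖v x‖ * (max Cf 1 * wt M x) :=
                mul_le_mul_of_nonneg_left h1 (norm_nonneg _)
            _ = max Cf 1 * (‖v x‖ * wt M x) := by ring
      _ = max Cf 1 * ‖v‖ := by
          rw [show (‖v‖ : ℝ) = pnorm v from rfl, pnorm_eq_sum v v.support subset_rfl,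
            Finset.mul_sum]⟩
  map_id M := BddHom.ext (LinearMap.ext fun v => by
    show Finsupp.mapDomain (fun x : M.carrier × ℕ => (x.1, x.2)) v = v
    exact Finsupp.mapDomain_id)
  map_comp {M N P} f g := BddHom.ext (LinearMap.ext fun v => by
    show Finsupp.mapDomain (fun x : M.carrier × ℕ => ((f ≫ g).toLinear x.1, x.2)) v
      = Finsupp.mapDomain _ (Finsupp.mapDomain _ v)
    have he : (fun x : M.carrier × ℕ => ((f ≫ g).toLinear x.1, x.2))
        = (fun x : N.carrier × ℕ => (g.toLinear x.1, x.2)) ∘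
          (fun x : M.carrier × ℕ => (f.toLinear x.1, x.2)) := rfl
    rw [he]
    exact Finsupp.mapDomain_comp)

noncomputable def epsNT : PF ⟶ 𝟭 (SNormMod R) where
  app M := ⟨evalL M, evalL_bdd M⟩
  naturality M N f := BddHom.ext (Finsupp.lhom_ext fun x r => by
    show evalL N (Finsupp.mapDomain _ (Finsupp.single x r)) = f.toLinear (evalL M (Finsupp.single x r))
    simp [Finsupp.mapDomain_single, evalL, LinearMap.toSpanSingleton_apply, map_smul])

lemma adm_eps (M : SNormMod R) : ∃ C : ℝ, ∀ (n : M.carrier) (ε : ℝ), 0 < ε →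
    ∃ m : PCarrier M, evalL M m = n ∧ ‖m‖ ≤ C * ‖n‖ + ε := by
  refine ⟨‖(1:R)‖, fun n ε hε => ?_⟩
  obtain ⟨k, hk⟩ := exists_pow_lt_of_lt_one (div_pos hε (by positivity : (0:ℝ) < ‖(1:R)‖ + 1))
    (by norm_num : (1/2 : ℝ) < 1)
  refine ⟨Finsupp.single (n, k) 1, ?_, ?_⟩
  · simp [evalL, LinearMap.toSpanSingleton_apply]
  · rw [pnorm_single]
    have h1 : ‖(1:R)‖ * (1/2:ℝ)^k ≤ (‖(1:R)‖ + 1) * (1/2)^k :=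
      mul_le_mul_of_nonneg_right (by linarith) (by positivity)
    have h2 : (‖(1:R)‖ + 1) * (1/2:ℝ)^k < ε := by
      calc (‖(1:R)‖ + 1) * (1/2:ℝ)^k < (‖(1:R)‖ + 1) * (ε / (‖(1:R)‖ + 1)) :=
            mul_lt_mul_of_pos_left hk (by positivity)
        _ = ε := mul_div_cancel₀ _ (by positivity)
    show ‖(1:R)‖ * wt M (n, k) ≤ _
    simp only [wt]
    nlinarith [norm_nonneg (1:R), norm_nonneg n]

lemma proj_Pobj (M : SNormMod R) : ProjSN (Pobj M) := by
  intro A B g hg h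
  obtain ⟨Cg, hCg⟩ := hg
  obtain ⟨Ch, hCh⟩ := h.bdd
  have choice : ∀ x : M.carrier × ℕ, ∃ a : A.carrier,
      g.toLinear a = h.toLinear (Finsupp.single x 1) ∧
      ‖a‖ ≤ Cg * ‖h.toLinear (Finsupp.single x 1)‖ + wt M x :=
    fun x => hCg _ _ (wt_pos M x)
  choose a ha hna using choice
  set K : ℝ := max Cg 0 * (max Ch 0 * ‖(1:R)‖) + 1 with hKdef
  have hK : ∀ x, ‖a x‖ ≤ K * wt M x := by
    intro x
    have h1 : ‖h.toLinear (Finsupp.single x 1)‖ ≤ max Ch 0 * ‖(1:R)‖ * wt M x := by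
      calc ‖h.toLinear (Finsupp.single x 1)‖ ≤ Ch * ‖(Finsupp.single x 1 : PCarrier M)‖ := hCh _
        _ ≤ max Ch 0 * ‖(Finsupp.single x 1 : PCarrier M)‖ :=
            mul_le_mul_of_nonneg_right (le_max_left _ _) (norm_nonneg _)
        _ = max Ch 0 * ‖(1:R)‖ * wt M x := by rw [pnorm_single]; ring
    have h2 : Cg * ‖h.toLinear (Finsupp.single x 1)‖ ≤
        max Cg 0 * (max Ch 0 * ‖(1:R)‖ * wt M x) := by
      rcases le_total Cg 0 with hc | hc
      · have := norm_nonneg (h.toLinear (Finsupp.single x 1))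
        have hw := wt_pos M x
        have : Cg * ‖h.toLinear (Finsupp.single x 1)‖ ≤ 0 :=
          mul_nonpos_of_nonpos_of_nonneg hc (norm_nonneg _)
        refine le_trans this ?_
        positivity
      · calc Cg * ‖h.toLinear (Finsupp.single x 1)‖
            ≤ Cg * (max Ch 0 * ‖(1:R)‖ * wt M x) := mul_le_mul_of_nonneg_left h1 hc
          _ ≤ max Cg 0 * (max Ch 0 * ‖(1:R)‖ * wt M x) := by
              refine mul_le_mul_of_nonneg_right (le_max_left _ _) ?_
              have := (wt_pos M x).le
              positivity
    calc ‖a x‖ ≤ Cg * ‖h.toLinear (Finsupp.single x 1)‖ + wt M x := hna x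
      _ ≤ max Cg 0 * (max Ch 0 * ‖(1:R)‖ * wt M x) + wt M x := by linarith
      _ = K * wt M x := by rw [hKdef]; ring
  refine ⟨⟨Finsupp.lsum R fun x => LinearMap.toSpanSingleton R A.carrier (a x),
    lsum_span_bdd M A a K hK⟩, ?_⟩
  refine BddHom.ext (Finsupp.lhom_ext fun x r => ?_)
  show g.toLinear ((Finsupp.lsum R fun x => LinearMap.toSpanSingleton R A.carrier (a x))
    (Finsupp.single x r)) = h.toLinear (Finsupp.single x r)
  have hx : (Finsupp.single x r : PCarrier M) = r • Finsupp.single x 1 := by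
    rw [Finsupp.smul_single, smul_eq_mul, mul_one]
  have hls : ((Finsupp.lsum R fun x => LinearMap.toSpanSingleton R A.carrier (a x))
      (Finsupp.single x 1)) = a x := by
    simp [LinearMap.toSpanSingleton_apply]
  rw [hx, map_smul, map_smul, map_smul, hls, ha]


end Aux

/-- Let `R` be a semi-normed ring. Then the category `sNorm_R` of
semi-normed `R`-modules and bounded `R`-linear maps has enough projectives, functorially:
there are a functor `P : sNorm_R ⥤ sNorm_R` (given on objects by
`P(M) = (⊕¹_{m : ρ(m) ≠ 0} R_{ρ(m)}) ⊕ (⊕¹_{m : ρ(m) = 0} R^{→0})`) and a natural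
transformation `ε : P ⟶ 𝟭` such that each `P(M)` is projective and each
`ε_M : P(M) → M` is an admissible epimorphism. -/
theorem sNorm_enough_functorial_projectives :
    ∃ (P : SNormMod R ⥤ SNormMod R) (ε : P ⟶ 𝟭 (SNormMod R)),
      ∀ M : SNormMod R, ProjSN (P.obj M) ∧ AdmEpiSN (ε.app M) := by
  exact ⟨PF, epsNT, fun M => ⟨proj_Pobj M, adm_eps M⟩⟩
end
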